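/- (Short time existence and uniqueness for the inviscid simplified Bardina model.) Let α > 0, v^in ∈ V' and f ∈ V'. Then there exists T* > 0, depending on ‖v^in‖_{V'}, such that the inviscid simplified Bardina model dv/dt + B(u,u) = f, v = u + α²Au, has a unique solution v ∈ C¹([−T*, T*]; V') with v(0) = v^in; equivalently u = (I + α²A)^{−1}v ∈ C¹([−T*, T*]; V). -/

import Mathlib

/-!
Abstract functional setting for the 3D viscous and inviscid simplified Bardina
turbulence models on the periodic box `Ω = [0,2πL]³` (Cao–Lunasin–Titi).

`H` is the closure in `L²(Ω)³` of the mean-zero, divergence-free, Ω-periodic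
trigonometric polynomials and `V` its closure in `H¹(Ω)³`; `incl : V ↪ H` is the
inclusion (so `‖incl w‖` is the L²-norm `|w|`, while the norm of `V` is
`‖w‖ = |∇w|`).  `A = -P_σ Δ` is the Stokes operator (modelled as an everywhere
defined linear map, which represents the actual Stokes operator on its domain
`DA = D(A) = H² ∩ V`), with smallest eigenvalue `λ₁ = L⁻²`, inverse `Ainv = A⁻¹`
and square root of the inverse `AinvSqrt = A^{-1/2}`.  `B w₁ w₂ = P_σ((w₁·∇)w₂)`
is the bilinear term, viewed as a continuous bilinear map `V × V → V'`, where the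
dual `V'` is modelled as `V →L[ℝ] ℝ` and `B w₁ w₂ w₃` is the duality pairing
`⟨B(w₁,w₂), w₃⟩_{V'}`.
-/

noncomputable section

structure BardinaSetting where
  /-- the size of the periodic box `Ω = [0,2πL]³` -/
  L : ℝ
  L_pos : 0 < L
  /-- the space `H` (divergence-free, mean-zero `L²`) -/
  H : Type
  [nH : NormedAddCommGroup H]
  [iH : InnerProductSpace ℝ H]
  [cH : CompleteSpace H]
  /-- the space `V` (divergence-free, mean-zero `H¹`), normed by `‖w‖ = |∇w|` -/
  V : Type
  [nV : NormedAddCommGroup V]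
  [iV : InnerProductSpace ℝ V]
  [cV : CompleteSpace V]
  /-- the inclusion `V ↪ H`; `‖incl w‖` is the `L²` norm `|w|` -/
  incl : V →L[ℝ] H
  incl_inj : Function.Injective incl
  /-- the domain `D(A) = H² ∩ V` of the Stokes operator -/
  DA : Submodule ℝ V
  /-- the Stokes operator `A = -P_σΔ` (an arbitrary linear extension beyond `DA`) -/
  A : V →ₗ[ℝ] H
  /-- `A⁻¹` -/
  Ainv : H →L[ℝ] H
  /-- `A^{-1/2}` -/
  AinvSqrt : H →L[ℝ] H
  /-- the bilinear map `B(w₁,w₂) = P_σ((w₁·∇)w₂) : V × V → V'`;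
  `B w₁ w₂ w₃ = ⟨B(w₁,w₂), w₃⟩_{V'}` -/
  B : V →L[ℝ] V →L[ℝ] V →L[ℝ] ℝ
  /-- the smallest eigenvalue `λ₁` of `A` -/
  lam1 : ℝ
  lam1_eq : lam1 = (L ^ 2)⁻¹
  /-- Poincaré inequality `|w|² ≤ λ₁⁻¹ ‖w‖²` -/
  poincare : ∀ w : V, ‖incl w‖ ^ 2 ≤ lam1⁻¹ * ‖w‖ ^ 2
  /-- `(A w₁, w₂)_{L²} = ((w₁, w₂))_V` for `w₁ ∈ D(A)` -/
  stokes_identity : ∀ w₁ ∈ DA, ∀ w₂ : V, (inner ℝ (A w₁) (incl w₂) : ℝ) = inner ℝ w₁ w₂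
  Ainv_spec : ∀ w ∈ DA, Ainv (A w) = incl w
  AinvSqrt_sq : ∀ h : H, AinvSqrt (AinvSqrt h) = Ainv h

open MeasureTheory Real Set

attribute [instance] BardinaSetting.nH BardinaSetting.iH BardinaSetting.cH
attribute [instance] BardinaSetting.nV BardinaSetting.iV BardinaSetting.cV

namespace BardinaSetting

variable (S : BardinaSetting)

/-- the `L²` norm `|w|` of `w ∈ V` -/
def normH (w : S.V) : ℝ := ‖S.incl w‖

/-- `K₁ := min{|A^{−1/2}f|²/ν, |A^{−1}f|²/(να²)}` -/
def K1 (ν α : ℝ) (f : S.H) : ℝ :=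
  min (‖S.AinvSqrt f‖ ^ 2 / ν) (‖S.Ainv f‖ ^ 2 / (ν * α ^ 2))

/-- `K₂ := min{|A^{−1/2}f|²/(να²), |f|²/ν}` -/
def K2 (ν α : ℝ) (f : S.H) : ℝ :=
  min (‖S.AinvSqrt f‖ ^ 2 / (ν * α ^ 2)) (‖f‖ ^ 2 / ν)

/-- `k₁ := |u^in|² + α²‖u^in‖² + K₁/(νλ₁)` -/
def k1 (ν α : ℝ) (f : S.H) (uin : S.V) : ℝ :=
  S.normH uin ^ 2 + α ^ 2 * ‖uin‖ ^ 2 + S.K1 ν α f / (ν * S.lam1)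

/-- the duality pairing `⟨v, w⟩_{V'}` where `v = u + α²Au`, namely
`(u,w)_{L²} + α²((u,w))_V` -/
def vPair (α : ℝ) (u w : S.V) : ℝ :=
  (inner ℝ (S.incl u) (S.incl w) : ℝ) + α ^ 2 * (inner ℝ u w : ℝ)

/-- `v = u + α²Au` as an element of `H` (meaningful when `u ∈ D(A)`) -/
def vH (α : ℝ) (u : S.V) : S.H := S.incl u + α ^ 2 • S.A u

/-- The map `u ↦ v = (I + α²A) u` from `V` to `V' = V →L[ℝ] ℝ`:
`⟨Jmap α u, w⟩ = (u,w)_{L²} + α²((u,w))_V`. -/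
def Jmap (α : ℝ) (u : S.V) : S.V →L[ℝ] ℝ :=
  (innerSL ℝ (S.incl u)).comp S.incl + α ^ 2 • innerSL ℝ u

/-- A weak solution on `[0,T]` of the viscous simplified Bardina model
`dv/dt + νAv + B(u,u) = f`, `v = u + α²Au`, with initial value `u(0) = u^in ∈ V`:
a function `u ∈ C([0,T];V) ∩ L²([0,T];D(A))` with `du/dt ∈ L²([0,T];H)` such that
for a.e. `t₀, t ∈ [0,T]` and every `w ∈ D(A)`,
`⟨v(t),w⟩ − ⟨v(t₀),w⟩ + ν∫_{t₀}^{t}(v(s),Aw)ds + ∫_{t₀}^{t}(B(u(s),u(s)),w)ds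
  = ∫_{t₀}^{t}(f,w)ds`. -/
structure IsWeakSolution (ν α T : ℝ) (f : S.H) (uin : S.V) (u : ℝ → S.V) : Prop where
  /-- initial value -/
  init : u 0 = uin
  /-- `u ∈ C([0,T];V)` -/
  cont : ContinuousOn u (Set.Icc 0 T)
  /-- `u(t) ∈ D(A)` for a.e. `t ∈ [0,T]` -/
  memDA : ∀ᵐ t ∂(volume.restrict (Set.Icc 0 T)), u t ∈ S.DA
  /-- `u ∈ L²([0,T];D(A))` -/
  sqIntA : IntegrableOn (fun t => ‖S.A (u t)‖ ^ 2) (Set.Icc 0 T)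
  /-- `du/dt ∈ L²([0,T];H)`: `u`, as an `H`-valued function, is the primitive of
  an `L²` function -/
  hasDeriv : ∃ u' : ℝ → S.H,
    IntegrableOn (fun t => ‖u' t‖ ^ 2) (Set.Icc 0 T) ∧
    ∀ t ∈ Set.Icc 0 T, S.incl (u t) = S.incl uin + ∫ s in (0:ℝ)..t, u' s
  /-- the weak formulation of the equation -/
  weak_form : ∀ w ∈ S.DA,
    ∀ᵐ t₀ ∂(volume.restrict (Set.Icc 0 T)),
      ∀ᵐ t ∂(volume.restrict (Set.Icc 0 T)),
        S.vPair α (u t) w - S.vPair α (u t₀) w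
            + ν * ∫ s in t₀..t, (inner ℝ (S.vH α (u s)) (S.A w) : ℝ)
            + ∫ s in t₀..t, S.B (u s) (u s) w
          = ∫ _s in t₀..t, (inner ℝ f (S.incl w) : ℝ)

/-- A solution on the time interval `I` of the inviscid simplified Bardina model
`dv/dt + B(u,u) = f`, `v = u + α²Au ∈ V'`, i.e. `u = (I + α²A)⁻¹ v`.
Since `u` is continuous, `dv/dt = f - B(u,u)` is continuous, so `v ∈ C¹(I;V')`. -/
def IsInviscidSolution (α : ℝ) (f : S.V →L[ℝ] ℝ) (I : Set ℝ) (u : ℝ → S.V) : Prop :=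
  ContinuousOn u I ∧
    ∀ t ∈ I, HasDerivWithinAt (fun s => S.Jmap α (u s)) (f - S.B (u t) (u t)) I t

end BardinaSetting
set_option maxSynthPendingDepth 3

private lemma bardina_exists_Jinv (S : BardinaSetting) (α : ℝ) (hα : 0 < α) :
    ∃ Ji : (S.V →L[ℝ] ℝ) →L[ℝ] S.V,
      (∀ u : S.V, Ji (S.Jmap α u) = u) ∧ (∀ v : S.V →L[ℝ] ℝ, S.Jmap α (Ji v) = v) := by
  classical
  let b : S.V →L[ℝ] S.V →L[ℝ] ℝ :=
    (innerSL ℝ (E := S.H)).bilinearComp S.incl S.incl + α ^ 2 • innerSL ℝ (E := S.V)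
  have hbapp : ∀ u w : S.V,
      b u w = (inner ℝ (S.incl u) (S.incl w) : ℝ) + α ^ 2 * (inner ℝ u w : ℝ) := by
    intro u w
    simp [b]
    exact Or.inl rfl
  have hJb : ∀ u : S.V, S.Jmap α u = b u := by
    intro u
    ext w
    simp [BardinaSetting.Jmap, hbapp u w]
  have hcoer : IsCoercive b := by
    refine ⟨α ^ 2, by positivity, fun u => ?_⟩
    have h1 : b u u = ‖S.incl u‖ ^ 2 + α ^ 2 * ‖u‖ ^ 2 := by
      rw [hbapp, real_inner_self_eq_norm_sq, real_inner_self_eq_norm_sq]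
    nlinarith [sq_nonneg ‖S.incl u‖, sq_nonneg ‖u‖]
  have hbE : ∀ u : S.V,
      b u = InnerProductSpace.toDual ℝ S.V (hcoer.continuousLinearEquivOfBilin u) := by
    intro u
    ext w
    rw [InnerProductSpace.toDual_apply_apply, hcoer.continuousLinearEquivOfBilin_apply]
  have hbij : Function.Bijective b := by
    have h : (b : S.V → (S.V →L[ℝ] ℝ)) =
        (InnerProductSpace.toDual ℝ S.V) ∘ (hcoer.continuousLinearEquivOfBilin) := by
      funext u; exact hbE u
    rw [h]
    exact (InnerProductSpace.toDual ℝ S.V).bijective.comp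
      hcoer.continuousLinearEquivOfBilin.bijective
  let Jeq : S.V ≃L[ℝ] (S.V →L[ℝ] ℝ) :=
    ContinuousLinearEquiv.ofBijective b (LinearMap.ker_eq_bot.mpr hbij.1)
      (LinearMap.range_eq_top.mpr hbij.2)
  have hJeq_apply : ∀ u : S.V, Jeq u = b u := fun _ => rfl
  refine ⟨↑Jeq.symm, fun u => ?_, fun v => ?_⟩
  · show Jeq.symm (S.Jmap α u) = u
    rw [hJb, ← hJeq_apply, Jeq.symm_apply_apply]
  · show S.Jmap α (Jeq.symm v) = v
    rw [hJb, ← hJeq_apply, Jeq.apply_symm_apply]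

/-- short time existence and uniqueness for the inviscid simplified
Bardina model.  For `α > 0`, `v^in ∈ V'` and `f ∈ V'` there is `T* > 0` (depending
on `‖v^in‖_{V'}`) such that `dv/dt + B(u,u) = f`, `v = u + α²Au`, has a unique
solution `v ∈ C¹([−T*,T*];V')`, `v(0) = v^in` (equivalently
`u = (I + α²A)^{−1}v ∈ C¹([−T*,T*];V)`). -/
theorem inviscid_short_time_existence_uniqueness (S : BardinaSetting) (α : ℝ)
    (hα : 0 < α) (f vin : S.V →L[ℝ] ℝ) :
    ∃ Tstar : ℝ, 0 < Tstar ∧ ∃ u : ℝ → S.V,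
      S.IsInviscidSolution α f (Set.Icc (-Tstar) Tstar) u ∧
      S.Jmap α (u 0) = vin ∧
      ∀ u₂ : ℝ → S.V, S.IsInviscidSolution α f (Set.Icc (-Tstar) Tstar) u₂ →
        S.Jmap α (u₂ 0) = vin → ∀ t ∈ Set.Icc (-Tstar) Tstar, u₂ t = u t := by
  classical
  obtain ⟨Ji, hJiJ, hJJi⟩ := bardina_exists_Jinv S α hα
  obtain ⟨cJ, hcJ0, hJiv⟩ : ∃ c : ℝ, 0 ≤ c ∧ ∀ v' : S.V →L[ℝ] ℝ, ‖Ji v'‖ ≤ c * ‖v'‖ :=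
    ⟨‖Ji‖, ContinuousLinearMap.opNorm_nonneg _, fun v' => Ji.le_opNorm v'⟩
  obtain ⟨cB, hcB0, hBv⟩ : ∃ c : ℝ, 0 ≤ c ∧ ∀ u w : S.V, ‖S.B u w‖ ≤ c * ‖u‖ * ‖w‖ :=
    ⟨‖S.B‖, ContinuousLinearMap.opNorm_nonneg _, fun u w => S.B.le_opNorm₂ u w⟩
  -- the right-hand side of the ODE in `V'`
  set F : (S.V →L[ℝ] ℝ) → (S.V →L[ℝ] ℝ) := fun v => f - S.B (Ji v) (Ji v) with hF
  -- local Lipschitz estimate for `F`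
  have hlip : ∀ M : ℝ, 0 ≤ M →
      LipschitzOnWith (Real.toNNReal (2 * cB * cJ ^ 2 * M)) F (Metric.closedBall 0 M) := by
    intro M hM
    rw [lipschitzOnWith_iff_dist_le_mul]
    intro v1 hv1 v2 hv2
    rw [Metric.mem_closedBall, dist_zero_right] at hv1 hv2
    set u1 := Ji v1 with hu1def
    set u2 := Ji v2 with hu2def
    have hd : F v1 - F v2 = S.B u2 u2 - S.B u1 u1 := by
      simp only [hF]
      abel
    have hsplit : S.B u2 u2 - S.B u1 u1 = S.B (u2 - u1) u2 + (S.B u1) (u2 - u1) := by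
      simp only [map_sub, ContinuousLinearMap.sub_apply]
      abel
    have hu1 : ‖u1‖ ≤ cJ * M :=
      le_trans (hJiv v1) (mul_le_mul_of_nonneg_left hv1 hcJ0)
    have hu2 : ‖u2‖ ≤ cJ * M :=
      le_trans (hJiv v2) (mul_le_mul_of_nonneg_left hv2 hcJ0)
    have hdu : ‖u2 - u1‖ ≤ cJ * dist v1 v2 := by
      have h : u2 - u1 = Ji (v2 - v1) := by rw [hu1def, hu2def, map_sub]
      rw [h, dist_eq_norm, norm_sub_rev v1 v2]
      exact hJiv _
    have hb1 : ‖S.B (u2 - u1) u2‖ ≤ cB * ‖u2 - u1‖ * ‖u2‖ := hBv _ _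
    have hb2 : ‖(S.B u1) (u2 - u1)‖ ≤ cB * ‖u1‖ * ‖u2 - u1‖ := hBv _ _
    have hdist : dist (F v1) (F v2) ≤ cB * ‖u2 - u1‖ * ‖u2‖ + cB * ‖u1‖ * ‖u2 - u1‖ := by
      rw [dist_eq_norm, hd, hsplit]
      exact le_trans (norm_add_le _ _) (add_le_add hb1 hb2)
    have hcoe : ((Real.toNNReal (2 * cB * cJ ^ 2 * M)) : ℝ) = 2 * cB * cJ ^ 2 * M :=
      Real.coe_toNNReal _ (by positivity)
    rw [hcoe]
    have p1 : ‖u2 - u1‖ * ‖u2‖ ≤ (cJ * dist v1 v2) * (cJ * M) :=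
      mul_le_mul hdu hu2 (norm_nonneg _) (by positivity)
    have p2 : ‖u1‖ * ‖u2 - u1‖ ≤ (cJ * M) * (cJ * dist v1 v2) :=
      mul_le_mul hu1 hdu (norm_nonneg _) (by positivity)
    calc dist (F v1) (F v2) ≤ cB * ‖u2 - u1‖ * ‖u2‖ + cB * ‖u1‖ * ‖u2 - u1‖ := hdist
      _ = cB * (‖u2 - u1‖ * ‖u2‖) + cB * (‖u1‖ * ‖u2 - u1‖) := by ring
      _ ≤ cB * ((cJ * dist v1 v2) * (cJ * M)) + cB * ((cJ * M) * (cJ * dist v1 v2)) :=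
          add_le_add (mul_le_mul_of_nonneg_left p1 hcB0) (mul_le_mul_of_nonneg_left p2 hcB0)
      _ = 2 * cB * cJ ^ 2 * M * dist v1 v2 := by ring
  -- Picard–Lindelöf data
  set M₀ : ℝ := ‖vin‖ + 1 with hM₀
  have hM₀0 : 0 ≤ M₀ := by positivity
  set C : ℝ := ‖f‖ + cB * (cJ * M₀) ^ 2 with hC
  have hC0 : 0 ≤ C := by positivity
  set Tstar : ℝ := (C + 1)⁻¹ with hT
  have hTpos : 0 < Tstar := by positivity
  have hsub : Metric.closedBall vin 1 ⊆ Metric.closedBall (0 : S.V →L[ℝ] ℝ) M₀ := by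
    intro x hx
    rw [Metric.mem_closedBall, dist_eq_norm] at hx
    rw [Metric.mem_closedBall, dist_zero_right]
    calc ‖x‖ = ‖x - vin + vin‖ := by rw [sub_add_cancel]
      _ ≤ ‖x - vin‖ + ‖vin‖ := norm_add_le _ _
      _ ≤ 1 + ‖vin‖ := by linarith
      _ = M₀ := by rw [hM₀]; ring
  have hpl : IsPicardLindelof (fun _ x => F x) (tmin := -Tstar) (tmax := Tstar)
      ⟨0, by constructor <;> linarith⟩ vin 1 0 (Real.toNNReal C)
      (Real.toNNReal (2 * cB * cJ ^ 2 * M₀)) := by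
    constructor
    · intro t _
      exact (hlip M₀ hM₀0).mono hsub
    · intro x _
      exact continuousOn_const
    · intro t _ x hx
      have hx' : ‖x‖ ≤ M₀ := by
        have h := hsub hx
        rwa [Metric.mem_closedBall, dist_zero_right] at h
      have h1 : ‖F x‖ ≤ ‖f‖ + cB * ‖Ji x‖ * ‖Ji x‖ := by
        rw [hF]
        exact le_trans (norm_sub_le _ _) (by gcongr; exact hBv _ _)
      have h2 : ‖Ji x‖ ≤ cJ * M₀ :=
        le_trans (hJiv x) (mul_le_mul_of_nonneg_left hx' hcJ0)
      have h3 : 0 ≤ ‖Ji x‖ := norm_nonneg _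
      rw [Real.coe_toNNReal _ hC0, hC]
      have h4 : cB * ‖Ji x‖ * ‖Ji x‖ ≤ cB * (cJ * M₀) ^ 2 := by
        have := mul_le_mul h2 h2 h3 (by positivity)
        nlinarith
      linarith
    · rw [Real.coe_toNNReal _ hC0]
      show C * max (Tstar - 0) (0 - -Tstar) ≤ ((1 : NNReal) : ℝ) - ((0 : NNReal) : ℝ)
      rw [NNReal.coe_one, NNReal.coe_zero, sub_zero (1 : ℝ)]
      have h : max (Tstar - 0) (0 - -Tstar) = Tstar := by
        have : Tstar - 0 = 0 - -Tstar := by ring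
        rw [this, max_self]
        ring
      rw [h, hT, inv_eq_one_div, mul_comm, div_mul_eq_mul_div, div_le_one (by linarith)]
      linarith
  obtain ⟨v, hv0, hvd⟩ := hpl.exists_eq_forall_mem_Icc_hasDerivWithinAt₀
  -- construct the solution `u = J⁻¹ v`
  refine ⟨Tstar, hTpos, fun t => Ji (v t), ?_, ?_, ?_⟩
  · constructor
    · exact Ji.continuous.comp_continuousOn
        (fun t ht => (hvd t ht).continuousWithinAt)
    · intro t ht
      have hfun : (fun s => S.Jmap α (Ji (v s))) = v := by
        funext s
        rw [hJJi]
      rw [hfun]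
      exact hvd t ht
  · rw [hJJi, hv0]
  · -- uniqueness
    intro u₂ hu₂ hu₂0 t ht
    set v₂ : ℝ → (S.V →L[ℝ] ℝ) := fun s => S.Jmap α (u₂ s) with hv₂def
    have hv₂u : ∀ s, Ji (v₂ s) = u₂ s := fun s => hJiJ (u₂ s)
    have hv₂d : ∀ s ∈ Set.Icc (-Tstar) Tstar,
        HasDerivWithinAt v₂ (F (v₂ s)) (Set.Icc (-Tstar) Tstar) s := by
      intro s hs
      have h := hu₂.2 s hs
      rw [hF]
      simp only [hv₂u s]
      exact h
    have hv₂c : ContinuousOn v₂ (Set.Icc (-Tstar) Tstar) :=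
      fun s hs => (hv₂d s hs).continuousWithinAt
    have hvc : ContinuousOn v (Set.Icc (-Tstar) Tstar) :=
      fun s hs => (hvd s hs).continuousWithinAt
    obtain ⟨M1, hM1⟩ := (isCompact_Icc (a := -Tstar) (b := Tstar)).exists_bound_of_continuousOn hvc
    obtain ⟨M2, hM2⟩ :=
      (isCompact_Icc (a := -Tstar) (b := Tstar)).exists_bound_of_continuousOn hv₂c
    set M : ℝ := max (max M1 M2) 0 with hM
    have hMnn : 0 ≤ M := le_max_right _ _
    have hvM : ∀ s ∈ Set.Icc (-Tstar) Tstar, v s ∈ Metric.closedBall (0 : S.V →L[ℝ] ℝ) M := by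
      intro s hs
      rw [Metric.mem_closedBall, dist_zero_right]
      exact le_trans (hM1 s hs) (le_trans (le_max_left _ _) (le_max_left _ _))
    have hv₂M : ∀ s ∈ Set.Icc (-Tstar) Tstar,
        v₂ s ∈ Metric.closedBall (0 : S.V →L[ℝ] ℝ) M := by
      intro s hs
      rw [Metric.mem_closedBall, dist_zero_right]
      exact le_trans (hM2 s hs) (le_trans (le_max_right _ _) (le_max_left _ _))
    have heq0 : v₂ 0 = v 0 := by
      rw [hv0, hv₂def]
      exact hu₂0
    have hIoo : Set.Ioo (-Tstar) Tstar ⊆ Set.Icc (-Tstar) Tstar := Set.Ioo_subset_Icc_self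
    have huniq : Set.EqOn v₂ v (Set.Icc (-Tstar) Tstar) := by
      refine ODE_solution_unique_of_mem_Icc
        (v := fun _ x => F x) (s := fun _ => Metric.closedBall (0 : S.V →L[ℝ] ℝ) M)
        (fun _ _ => hlip M hMnn) ⟨by linarith, by linarith⟩ hv₂c ?_
        (fun s hs => hv₂M s (hIoo hs)) hvc ?_ (fun s hs => hvM s (hIoo hs)) heq0
      · intro s hs
        exact (hv₂d s (hIoo hs)).hasDerivAt (Icc_mem_nhds hs.1 hs.2)
      · intro s hs
        exact (hvd s (hIoo hs)).hasDerivAt (Icc_mem_nhds hs.1 hs.2)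
    rw [← hv₂u t, huniq ht]
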